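/- Let n be an odd number, d invertible in Z/nZ, a ∈ Z/nZ, and S = IAP((a,-d,d-a),(d,-2d,d)) in Z/nZ. Then the Steinhaus triangle ∇S[0,3n-1] of order 3n (generated by the first 3n terms of S) is balanced in Z/nZ: every element of Z/nZ occurs exactly (3n+1)·3/2 times. -/

import Mathlib

def IAP3 {G : Type*} [AddCommGroup G] (a0 a1 a2 d0 d1 d2 : G) : ℤ → G :=
  fun j => if j % 3 = 0 then a0 + (j / 3) • d0
    else if j % 3 = 1 then a1 + (j / 3) • d1
    else a2 + (j / 3) • d2

def steinhaus {n : ℕ} (x : ℕ → ZMod n) (m : ℕ) : Multiset (ZMod n) :=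
  ((Finset.range m ×ˢ Finset.range m).filter (fun p => p.1 + p.2 < m)).val.map
    (fun p => ∑ k ∈ Finset.range (p.1 + 1), p.1.choose k • x (p.2 + k))

/-! ### Auxiliary lemmas -/

/-- Closed form of `F` (the Steinhaus triangle entry). -/
def Fm (n : ℕ) (a d : ZMod n) (i j : ℕ) : ZMod n :=
  if (i + 2*j) % 3 = 0 then (-1)^i * (a + ((((j:ℤ) - (i:ℤ))/3 : ℤ) : ZMod n) * d)
  else if (i + 2*j) % 3 = 1 then
    (-1)^(i+1) * (a - (((2*(i:ℤ)+(j:ℤ)+1)/3 : ℤ) : ZMod n) * d)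
  else ((-1)^(i+1) * ((((i:ℤ)+2*(j:ℤ)+1)/3 : ℤ) : ZMod n)) * d

lemma signEq {n : ℕ} {i k : ℕ} (h : i % 2 = k % 2) : ((-1 : ZMod n))^i = (-1)^k := by
  rcases Nat.even_or_odd i with hi | hi
  · have hk : Even k := by rw [Nat.even_iff] at hi ⊢; omega
    rw [Even.neg_one_pow hi, Even.neg_one_pow hk]
  · have hk : Odd k := by rw [Nat.odd_iff] at hi ⊢; omega
    rw [Odd.neg_one_pow hi, Odd.neg_one_pow hk]

lemma parityCount (L U ε : ℕ) (hε : ε < 2) :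
    ((Finset.Ico L U).filter (fun k => k % 2 = ε)).card = (U + 1 - ε)/2 - (L + 1 - ε)/2 := by
  induction U with
  | zero => simp; omega
  | succ U ih =>
    rcases le_or_gt L U with h | h
    · rw [show Finset.Ico L (U+1) = insert U (Finset.Ico L U) by
        exact Nat.Ico_succ_right_eq_insert_Ico h,
        Finset.filter_insert]
      by_cases hU : U % 2 = ε
      · rw [if_pos hU, Finset.card_insert_of_notMem (by simp)]
        omega
      · rw [if_neg hU]; omega
    · rw [Finset.Ico_eq_empty (by omega)]
      simp; omega

lemma castValEq {n : ℕ} [NeZero n] (c : ZMod n) : ((c.val : ℕ) : ZMod n) = c := by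
  simp [ZMod.natCast_val, ZMod.cast_id]

lemma natResid {n : ℕ} [NeZero n] (v γ : ℕ) (hγ : γ < n) (hv : v < 2*n) :
    ((v : ZMod n) = (γ : ZMod n)) ↔ (v = γ ∨ v = γ + n) := by
  rw [ZMod.natCast_eq_natCast_iff]
  constructor
  · intro h
    have h1 : v % n = γ := by
      have h' : v % n = γ % n := h
      rw [Nat.mod_eq_of_lt hγ] at h'
      exact h'
    have h2 : v / n < 2 := Nat.div_lt_of_lt_mul (by omega)
    have h3 := Nat.div_add_mod v n
    have h4 : v / n = 0 ∨ v / n = 1 := by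
      match h5 : v / n, h2 with
      | 0, _ => exact Or.inl rfl
      | 1, _ => exact Or.inr rfl
    rcases h4 with h4 | h4 <;> rw [h4] at h3 <;> omega
  · rintro (rfl | rfl)
    · rfl
    · show (γ + n) % n = γ % n
      rw [Nat.add_mod_right]

lemma intResid {n : ℕ} [NeZero n] (q : ℤ) (γ : ℕ) (hγ : γ < n)
    (h1 : -(n:ℤ) < q) (h2 : q < n) :
    ((q : ZMod n) = ((γ:ℕ) : ZMod n)) ↔ (q = (γ:ℤ) ∨ q + n = (γ:ℤ)) := by
  have : (((γ:ℕ) : ZMod n) : ZMod n) = (((γ:ℕ):ℤ) : ZMod n) := by push_cast; ring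
  rw [this, ZMod.intCast_eq_intCast_iff, Int.modEq_iff_dvd]
  constructor
  · intro h
    obtain ⟨k, hk⟩ := h
    have hk0 : 0 ≤ k := by
      by_contra hc
      push_neg at hc
      have : k ≤ -1 := by omega
      have : (n:ℤ) * k ≤ (n:ℤ) * (-1) := by
        apply mul_le_mul_of_nonneg_left this (by positivity)
      omega
    have hk1 : k ≤ 1 := by
      by_contra hc
      push_neg at hc
      have : (n:ℤ) * 2 ≤ (n:ℤ) * k := by
        apply mul_le_mul_of_nonneg_left (by omega) (by positivity)
      omega
    interval_cases k <;> omega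
  · rintro (h | h)
    · exact ⟨0, by omega⟩
    · exact ⟨1, by omega⟩

lemma valNegRel {n : ℕ} [NeZero n] (c : ZMod n) :
    c.val + (-c).val = 0 ∨ c.val + (-c).val = n := by
  have h : ((c.val + (-c).val : ℕ) : ZMod n) = 0 := by
    push_cast [castValEq]; ring
  rw [ZMod.natCast_eq_zero_iff] at h
  obtain ⟨t, ht⟩ := h
  have h1 : c.val < n := ZMod.val_lt c
  have h2 : (-c).val < n := ZMod.val_lt (-c)
  have ht2 : t < 2 := by
    by_contra hc
    push_neg at hc
    have : n * 2 ≤ n * t := Nat.mul_le_mul_left n hc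
    have hn : 0 < n := Nat.pos_of_ne_zero (NeZero.ne n)
    omega
  have hn : 0 < n := Nat.pos_of_ne_zero (NeZero.ne n)
  have h4 : t = 0 ∨ t = 1 := by omega
  rcases h4 with h4 | h4 <;> rw [h4] at ht <;> omega

lemma mulUnitIff {n : ℕ} (u d x y : ZMod n) (hu : u * d = 1) :
    y * d = x ↔ y = x * u := by
  constructor <;> intro h
  · linear_combination u * h - y * hu
  · linear_combination d * h + x * hu

/-! ### Line-counting lemmas -/

section Lines
variable {n : ℕ} (S : Finset (ℕ × ℕ))

lemma lineB (k : ℕ) (hS : ∀ p : ℕ × ℕ, p ∈ S ↔ p.1 + p.2 < 3*n) :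
    (S.filter (fun p => p.1 + 2*p.2 + 1 = 3*k)).card = (3*k+1)/2 - (3*k - 3*n) := by
  rw [show (3*k+1)/2 - (3*k-3*n) = (Finset.Ico (3*k-3*n) ((3*k+1)/2)).card from
    (Nat.card_Ico _ _).symm]
  apply Finset.card_nbij' (fun p => p.2) (fun j => (3*k-1-2*j, j)) <;> simp only [Set.MapsTo, Set.LeftInvOn, Set.RightInvOn, Finset.mem_coe]
  · intro p hp
    simp only [Finset.mem_filter, hS, Finset.mem_Ico] at hp ⊢
    omega
  · intro j hj
    simp only [Finset.mem_Ico] at hj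
    simp only [Finset.mem_filter, hS]
    omega
  · intro p hp
    simp only [Finset.mem_filter, hS] at hp
    have : 3*k-1-2*p.2 = p.1 := by omega
    simp [this]
  · intro j hj
    simp

lemma lineM1 (k ε : ℕ) (hε : ε < 2) (hS : ∀ p : ℕ × ℕ, p ∈ S ↔ p.1 + p.2 < 3*n) :
    (S.filter (fun p => p.1 % 2 = ε ∧ 2*p.1 + p.2 + 1 = 3*k)).card =
      (3*k+3-2*ε)/4 - (3*k+1-3*n-ε)/2 := by
  rw [show (3*k+3-2*ε)/4 - (3*k+1-3*n-ε)/2 =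
      (Finset.Ico ((3*k+1-3*n-ε)/2) ((3*k+3-2*ε)/4)).card from by rw [Nat.card_Ico]]
  apply Finset.card_nbij' (fun p => (p.1 - ε)/2) (fun s => (2*s+ε, 3*k-1-(4*s+2*ε))) <;> simp only [Set.MapsTo, Set.LeftInvOn, Set.RightInvOn, Finset.mem_coe]
  · intro p hp
    simp only [Finset.mem_filter, hS, Finset.mem_Ico] at hp ⊢
    omega
  · intro s hs
    simp only [Finset.mem_Ico] at hs
    simp only [Finset.mem_filter, hS]
    refine ⟨show 2*s+ε + (3*k-1-(4*s+2*ε)) < 3*n by omega,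
      show (2*s+ε) % 2 = ε by omega,
      show 2*(2*s+ε) + (3*k-1-(4*s+2*ε)) + 1 = 3*k by omega⟩
  · intro p hp
    simp only [Finset.mem_filter, hS] at hp
    have h1 : 2*((p.1-ε)/2)+ε = p.1 := by omega
    have h2 : 3*k-1-(4*((p.1-ε)/2)+2*ε) = p.2 := by omega
    rw [h1, h2]
  · intro s hs
    simp only [Finset.mem_Ico] at hs
    show (2*s+ε - ε)/2 = s
    omega

lemma lineM0a (t ε : ℕ) (hε : ε < 2) (hS : ∀ p : ℕ × ℕ, p ∈ S ↔ p.1 + p.2 < 3*n) :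
    (S.filter (fun p => p.1 % 2 = ε ∧ p.2 = p.1 + t)).card = (3*n+3-t-2*ε)/4 := by
  rw [show (3*n+3-t-2*ε)/4 = (Finset.range ((3*n+3-t-2*ε)/4)).card from
    (Finset.card_range _).symm]
  apply Finset.card_nbij' (fun p => (p.1 - ε)/2) (fun s => (2*s+ε, 2*s+ε+t)) <;> simp only [Set.MapsTo, Set.LeftInvOn, Set.RightInvOn, Finset.mem_coe]
  · intro p hp
    simp only [Finset.mem_filter, hS, Finset.mem_range] at hp ⊢
    omega
  · intro s hs
    simp only [Finset.mem_range] at hs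
    simp only [Finset.mem_filter, hS]
    refine ⟨show 2*s+ε + (2*s+ε+t) < 3*n by omega,
      show (2*s+ε) % 2 = ε by omega, trivial⟩
  · intro p hp
    simp only [Finset.mem_filter, hS] at hp
    have h1 : 2*((p.1-ε)/2)+ε = p.1 := by omega
    have h2 : 2*((p.1-ε)/2)+ε+t = p.2 := by omega
    rw [h2, h1]
  · intro s hs
    simp only [Finset.mem_range] at hs
    show (2*s+ε - ε)/2 = s
    omega

lemma lineM0b (t ε : ℕ) (hε : ε < 2) (hS : ∀ p : ℕ × ℕ, p ∈ S ↔ p.1 + p.2 < 3*n) :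
    (S.filter (fun p => p.1 % 2 = ε ∧ p.1 = p.2 + t)).card =
      (3*n+3-t-2*((ε+t)%2))/4 := by
  rw [show (3*n+3-t-2*((ε+t)%2))/4 = (Finset.range ((3*n+3-t-2*((ε+t)%2))/4)).card from
    (Finset.card_range _).symm]
  apply Finset.card_nbij' (fun p => (p.2 - (ε+t)%2)/2)
    (fun s => (2*s+(ε+t)%2+t, 2*s+(ε+t)%2)) <;> simp only [Set.MapsTo, Set.LeftInvOn, Set.RightInvOn, Finset.mem_coe]
  · intro p hp
    simp only [Finset.mem_filter, hS, Finset.mem_range] at hp ⊢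
    omega
  · intro s hs
    simp only [Finset.mem_range] at hs
    simp only [Finset.mem_filter, hS]
    refine ⟨show 2*s+(ε+t)%2+t + (2*s+(ε+t)%2) < 3*n by omega,
      show (2*s+(ε+t)%2+t) % 2 = ε by omega, trivial⟩
  · intro p hp
    simp only [Finset.mem_filter, hS] at hp
    have h2 : 2*((p.2-(ε+t)%2)/2)+(ε+t)%2 = p.2 := by omega
    rw [h2, ← hp.2.2]
  · intro s hs
    simp only [Finset.mem_range] at hs
    show (2*s+(ε+t)%2 - (ε+t)%2)/2 = s
    omega

end Lines


/-! ### The closed formula for triangle entries -/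

lemma Fm_rec (n : ℕ) (a d : ZMod n) (i j : ℕ) :
    Fm n a d (i+1) j = Fm n a d i j + Fm n a d i (j+1) := by
  have h3 : (i + 2*j) % 3 = 0 ∨ (i + 2*j) % 3 = 1 ∨ (i + 2*j) % 3 = 2 := by omega
  rcases h3 with h | h | h
  · unfold Fm
    rw [if_neg (by omega : ¬((i+1) + 2*j) % 3 = 0),
        if_pos (by omega : ((i+1) + 2*j) % 3 = 1),
        if_pos (by omega : (i + 2*j) % 3 = 0),
        if_neg (by omega : ¬(i + 2*(j+1)) % 3 = 0),
        if_neg (by omega : ¬(i + 2*(j+1)) % 3 = 1)]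
    push_cast
    have hz := congrArg (fun z : ℤ => (z : ZMod n))
      (show ((2*((i:ℤ)+1)+(j:ℤ)+1)/3 : ℤ) =
        (((i:ℤ)+2*((j:ℤ)+1)+1)/3) - (((j:ℤ) - (i:ℤ))/3) from by omega)
    push_cast at hz
    rw [hz]; ring
  · unfold Fm
    rw [if_neg (by omega : ¬((i+1) + 2*j) % 3 = 0),
        if_neg (by omega : ¬((i+1) + 2*j) % 3 = 1),
        if_neg (by omega : ¬(i + 2*j) % 3 = 0),
        if_pos (by omega : (i + 2*j) % 3 = 1),
        if_pos (by omega : (i + 2*(j+1)) % 3 = 0)]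
    push_cast
    have hz := congrArg (fun z : ℤ => (z : ZMod n))
      (show ((((i:ℤ)+1)+2*(j:ℤ)+1)/3 : ℤ) =
        ((2*(i:ℤ)+(j:ℤ)+1)/3) + ((((j:ℤ)+1) - (i:ℤ))/3) from by omega)
    push_cast at hz
    rw [hz]; ring
  · unfold Fm
    rw [if_pos (by omega : ((i+1) + 2*j) % 3 = 0),
        if_neg (by omega : ¬(i + 2*j) % 3 = 0),
        if_neg (by omega : ¬(i + 2*j) % 3 = 1),
        if_neg (by omega : ¬(i + 2*(j+1)) % 3 = 0),
        if_pos (by omega : (i + 2*(j+1)) % 3 = 1)]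
    push_cast
    have hz := congrArg (fun z : ℤ => (z : ZMod n))
      (show (((i:ℤ)+2*(j:ℤ)+1)/3 : ℤ) =
        ((2*(i:ℤ)+((j:ℤ)+1)+1)/3) + (((j:ℤ) - ((i:ℤ)+1))/3) from by omega)
    push_cast at hz
    rw [hz]; ring

lemma T_eq_Fm (n : ℕ) (a d : ZMod n) : ∀ i j : ℕ,
    (∑ k ∈ Finset.range (i + 1),
      i.choose k • IAP3 a (-d) (d - a) d (-(2 * d)) d (((j + k : ℕ)) : ℤ)) = Fm n a d i j := by
  intro i
  induction i with
  | zero =>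
    intro j
    rw [Finset.sum_range_one]
    simp only [Nat.choose_zero_right, one_smul, Nat.add_zero]
    have h3 : j % 3 = 0 ∨ j % 3 = 1 ∨ j % 3 = 2 := by omega
    rcases h3 with h | h | h
    · unfold IAP3 Fm
      rw [if_pos (by omega : ((j:ℤ)) % 3 = 0), if_pos (by omega : (0 + 2*j) % 3 = 0)]
      rw [zsmul_eq_mul]
      push_cast
      have hz := congrArg (fun z : ℤ => (z : ZMod n))
        (show (((j:ℤ) - 0)/3 : ℤ) = ((j:ℤ)/3) from by omega)
      push_cast at hz
      rw [hz]; ring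
    · unfold IAP3 Fm
      rw [if_neg (by omega : ¬((j:ℤ)) % 3 = 0), if_pos (by omega : ((j:ℤ)) % 3 = 1),
          if_neg (by omega : ¬(0 + 2*j) % 3 = 0), if_neg (by omega : ¬(0 + 2*j) % 3 = 1)]
      rw [zsmul_eq_mul]
      push_cast
      have hz := congrArg (fun z : ℤ => (z : ZMod n))
        (show ((0+2*(j:ℤ)+1)/3 : ℤ) = 2*((j:ℤ)/3) + 1 from by omega)
      push_cast at hz
      rw [hz]; push_cast; ring
    · unfold IAP3 Fm
      rw [if_neg (by omega : ¬((j:ℤ)) % 3 = 0), if_neg (by omega : ¬((j:ℤ)) % 3 = 1),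
          if_neg (by omega : ¬(0 + 2*j) % 3 = 0), if_pos (by omega : (0 + 2*j) % 3 = 1)]
      rw [zsmul_eq_mul]
      push_cast
      have hz := congrArg (fun z : ℤ => (z : ZMod n))
        (show ((2*0+(j:ℤ)+1)/3 : ℤ) = ((j:ℤ)/3) + 1 from by omega)
      push_cast at hz
      rw [hz]; push_cast; ring
  | succ i ih =>
    intro j
    have pascal : ∀ f : ℕ → ZMod n,
        ∑ k ∈ Finset.range (i+2), (i+1).choose k • f k =
          (∑ k ∈ Finset.range (i+1), i.choose k • f k) +
          ∑ k ∈ Finset.range (i+1), i.choose k • f (k+1) := by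
      intro f
      rw [Finset.sum_range_succ' (fun k => (i+1).choose k • f k) (i+1)]
      have step1 : ∀ k, (i+1).choose (k+1) • f (k+1) =
          i.choose k • f (k+1) + i.choose (k+1) • f (k+1) := by
        intro k
        rw [Nat.choose_succ_succ, add_smul]
      rw [Finset.sum_congr rfl (fun k _ => step1 k), Finset.sum_add_distrib]
      have step2 : ∑ k ∈ Finset.range (i+1), i.choose (k+1) • f (k+1) +
          i.choose 0 • f 0 = ∑ k ∈ Finset.range (i+1), i.choose k • f k := by
        rw [← Finset.sum_range_succ' (fun k => i.choose k • f k) (i+1)]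
        rw [Finset.sum_range_succ (fun k => i.choose k • f k) (i+1)]
        rw [Nat.choose_succ_self, zero_smul, add_zero]
      simp only [Nat.choose_zero_right, one_smul] at step2 ⊢
      calc (∑ k ∈ Finset.range (i+1), i.choose k • f (k+1) +
              ∑ k ∈ Finset.range (i+1), i.choose (k+1) • f (k+1)) + f 0
          = ∑ k ∈ Finset.range (i+1), i.choose k • f (k+1) +
              (∑ k ∈ Finset.range (i+1), i.choose (k+1) • f (k+1) + f 0) := by ring
        _ = ∑ k ∈ Finset.range (i+1), i.choose k • f (k+1) +
              ∑ k ∈ Finset.range (i+1), i.choose k • f k := by rw [step2]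
        _ = _ := by ring
    have happ := pascal (fun k => IAP3 a (-d) (d - a) d (-(2 * d)) d (((j + k : ℕ)) : ℤ))
    try simp only at happ
    rw [happ, ih j]
    have hshift : (∑ k ∈ Finset.range (i+1),
        i.choose k • IAP3 a (-d) (d - a) d (-(2 * d)) d (((j + (k+1) : ℕ)) : ℤ)) =
        ∑ k ∈ Finset.range (i+1),
        i.choose k • IAP3 a (-d) (d - a) d (-(2 * d)) d ((((j+1) + k : ℕ)) : ℤ) := by
      apply Finset.sum_congr rfl
      intro k _
      congr 2
      omega
    rw [hshift, ih (j+1), Fm_rec]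


lemma intResid2 {n : ℕ} [NeZero n] (q : ℤ) (γ : ℕ) (hγ : γ < n)
    (h1 : 0 ≤ q) (h2 : q < 2*(n:ℤ)) :
    ((q : ZMod n) = ((γ:ℕ) : ZMod n)) ↔ (q = (γ:ℤ) ∨ q = (γ:ℤ) + n) := by
  have hc : (((γ:ℕ) : ZMod n) : ZMod n) = (((γ:ℕ):ℤ) : ZMod n) := by push_cast; ring
  rw [hc, ZMod.intCast_eq_intCast_iff, Int.modEq_iff_dvd]
  have hn : 0 < n := Nat.pos_of_ne_zero (NeZero.ne n)
  constructor
  · intro h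
    obtain ⟨k, hk⟩ := h
    have hk0 : -1 ≤ k := by
      by_contra hcon
      push_neg at hcon
      have : (n:ℤ) * k ≤ (n:ℤ) * (-2) := by
        apply mul_le_mul_of_nonneg_left (by omega) (by positivity)
      omega
    have hk1 : k ≤ 0 := by
      by_contra hcon
      push_neg at hcon
      have : (n:ℤ) * 1 ≤ (n:ℤ) * k := by
        apply mul_le_mul_of_nonneg_left (by omega) (by positivity)
      omega
    interval_cases k <;> omega
  · rintro (h | h)
    · exact ⟨0, by omega⟩
    · exact ⟨-1, by omega⟩

lemma lemB {n : ℕ} (hn : n % 2 = 1) (a d x u : ZMod n) (hu : u * d = 1)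
    (S : Finset (ℕ × ℕ)) (hS : ∀ p : ℕ × ℕ, p ∈ S ↔ p.1 + p.2 < 3*n) :
    (S.filter (fun p => (p.1 + 2*p.2) % 3 = 2 ∧ Fm n a d p.1 p.2 = x)).card
      = (3*n+1)/2 := by
  haveI : NeZero n := ⟨by omega⟩
  set c : ZMod n := x * u with hc
  set γ : ℕ := c.val with hγdef
  set δ : ℕ := (-c).val with hδdef
  have hγ : γ < n := ZMod.val_lt c
  have hδ : δ < n := ZMod.val_lt (-c)
  have hrel : γ + δ = 0 ∨ γ + δ = n := valNegRel c
  set ke : ℕ := if γ % 2 = 0 then γ else γ + n with hkedef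
  set ko : ℕ := if δ % 2 = 1 then δ else δ + n with hkodef
  have hke : (γ % 2 = 0 ∧ ke = γ) ∨ (γ % 2 = 1 ∧ ke = γ + n) := by
    rw [hkedef]; split_ifs with h
    · exact Or.inl ⟨h, rfl⟩
    · exact Or.inr ⟨by omega, rfl⟩
  have hko : (δ % 2 = 1 ∧ ko = δ) ∨ (δ % 2 = 0 ∧ ko = δ + n) := by
    rw [hkodef]; split_ifs with h
    · exact Or.inl ⟨h, rfl⟩
    · exact Or.inr ⟨by omega, rfl⟩
  have hsplit : S.filter (fun p => (p.1 + 2*p.2) % 3 = 2 ∧ Fm n a d p.1 p.2 = x) =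
      (S.filter (fun p => p.1 + 2*p.2 + 1 = 3*ke)) ∪
      (S.filter (fun p => p.1 + 2*p.2 + 1 = 3*ko)) := by
    rw [← Finset.filter_or]
    apply Finset.filter_congr
    intro p hp
    rw [hS] at hp
    obtain ⟨i, j⟩ := p
    simp only
    constructor
    · rintro ⟨hm, hF⟩
      unfold Fm at hF
      rw [if_neg (by omega), if_neg (by omega)] at hF
      rw [mulUnitIff u d x _ hu] at hF
      set V : ℤ := ((i:ℤ)+2*(j:ℤ)+1)/3 with hV
      have hV3 : 3*V = (i:ℤ)+2*(j:ℤ)+1 := by omega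
      have hVb : 0 ≤ V ∧ V < 2*(n:ℤ) := by omega
      by_cases hi : i % 2 = 0
      · have hs : ((-1 : ZMod n))^(i+1) = -1 := Odd.neg_one_pow (by
          rw [Nat.odd_iff]; omega)
        rw [hs] at hF
        have hF' : ((V : ℤ) : ZMod n) = ((δ:ℕ) : ZMod n) := by
          rw [hδdef, castValEq]
          linear_combination -hF
        rw [intResid2 V δ hδ hVb.1 hVb.2] at hF'
        right
        rcases hF' with h | h <;> rcases hko with ⟨h1, h2⟩ | ⟨h1, h2⟩ <;> omega
      · have hs : ((-1 : ZMod n))^(i+1) = 1 := Even.neg_one_pow (by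
          rw [Nat.even_iff]; omega)
        rw [hs] at hF
        have hF' : ((V : ℤ) : ZMod n) = ((γ:ℕ) : ZMod n) := by
          rw [hγdef, castValEq]
          linear_combination hF
        rw [intResid2 V γ hγ hVb.1 hVb.2] at hF'
        left
        rcases hF' with h | h <;> rcases hke with ⟨h1, h2⟩ | ⟨h1, h2⟩ <;> omega
    · intro hline
      have hm : (i + 2*j) % 3 = 2 := by
        rcases hke with ⟨h1, h2⟩ | ⟨h1, h2⟩ <;> rcases hko with ⟨h3, h4⟩ | ⟨h3, h4⟩ <;> omega
      refine ⟨hm, ?_⟩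
      unfold Fm
      rw [if_neg (by omega), if_neg (by omega)]
      rw [mulUnitIff u d x _ hu]
      set V : ℤ := ((i:ℤ)+2*(j:ℤ)+1)/3 with hV
      have hV3 : 3*V = (i:ℤ)+2*(j:ℤ)+1 := by omega
      have hγc : ((γ:ℕ) : ZMod n) = c := castValEq c
      have hδc : ((δ:ℕ) : ZMod n) = -c := castValEq (-c)
      rcases hline with h | h
      · -- i + 2j + 1 = 3*ke, ke even, so i odd
        have hkeven : ke % 2 = 0 := by rcases hke with ⟨h1,h2⟩|⟨h1,h2⟩ <;> omega
        have hiodd : i % 2 = 1 := by omega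
        have hs : ((-1 : ZMod n))^(i+1) = 1 := Even.neg_one_pow (by
          rw [Nat.even_iff]; omega)
        rw [hs, one_mul]
        have : V = ((ke:ℕ) : ℤ) := by omega
        rw [this]
        rcases hke with ⟨h1, h2⟩ | ⟨h1, h2⟩
        · rw [h2]; push_cast; rw [hγc]
        · rw [h2]; push_cast [ZMod.natCast_self]; rw [hγc]; ring
      · have hkodd : ko % 2 = 1 := by rcases hko with ⟨h1,h2⟩|⟨h1,h2⟩ <;> omega
        have hieven : i % 2 = 0 := by omega
        have hs : ((-1 : ZMod n))^(i+1) = -1 := Odd.neg_one_pow (by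
          rw [Nat.odd_iff]; omega)
        rw [hs]
        have : V = ((ko:ℕ) : ℤ) := by omega
        rw [this]
        rcases hko with ⟨h1, h2⟩ | ⟨h1, h2⟩
        · rw [h2]; push_cast; rw [hδc]; ring
        · rw [h2]; push_cast [ZMod.natCast_self]; rw [hδc]; ring
  rw [hsplit]
  have hdisj : Disjoint (S.filter (fun p => p.1 + 2*p.2 + 1 = 3*ke))
      (S.filter (fun p => p.1 + 2*p.2 + 1 = 3*ko)) := by
    rw [Finset.disjoint_left]
    intro p hp1 hp2
    simp only [Finset.mem_filter] at hp1 hp2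
    rcases hke with ⟨h1,h2⟩|⟨h1,h2⟩ <;> rcases hko with ⟨h3,h4⟩|⟨h3,h4⟩ <;> omega
  rw [Finset.card_union_of_disjoint hdisj, lineB S ke hS, lineB S ko hS]
  rcases hke with ⟨h1,h2⟩|⟨h1,h2⟩ <;> rcases hko with ⟨h3,h4⟩|⟨h3,h4⟩ <;> omega



set_option maxHeartbeats 1600000 in
lemma lemA {n : ℕ} (hn : n % 2 = 1) (a d x u : ZMod n) (hu : u * d = 1)
    (ε : ℕ) (hε : ε < 2)
    (S : Finset (ℕ × ℕ)) (hS : ∀ p : ℕ × ℕ, p ∈ S ↔ p.1 + p.2 < 3*n) :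
    (S.filter (fun p => (p.1 + 2*p.2) % 3 = 0 ∧ p.1 % 2 = ε ∧ Fm n a d p.1 p.2 = x)).card
    + (S.filter (fun p => (p.1 + 2*p.2) % 3 = 1 ∧ p.1 % 2 = 1 - ε ∧ Fm n a d p.1 p.2 = x)).card
      = (3*n+1)/2 := by
  haveI : NeZero n := ⟨by omega⟩
  set c : ZMod n := ((-1)^ε * x - a) * u with hc
  set γ : ℕ := c.val with hγdef
  set δ : ℕ := (-c).val with hδdef
  have hγ : γ < n := ZMod.val_lt c
  have hδ : δ < n := ZMod.val_lt (-c)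
  have hrel : γ + δ = 0 ∨ γ + δ = n := valNegRel c
  have hγc : ((γ:ℕ) : ZMod n) = c := castValEq c
  have hδc : ((δ:ℕ) : ZMod n) = -c := castValEq (-c)
  have hsq : ((-1 : ZMod n))^ε * ((-1 : ZMod n))^ε = 1 := by
    interval_cases ε <;> norm_num
  have hcd : c * d = (-1)^ε * x - a := by
    rw [hc]; linear_combination ((-1 : ZMod n)^ε * x - a) * hu
  -- rewrite the m=0 filter
  have hm0 : S.filter (fun p => (p.1 + 2*p.2) % 3 = 0 ∧ p.1 % 2 = ε ∧ Fm n a d p.1 p.2 = x)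
      = (S.filter (fun p => p.1 % 2 = ε ∧ p.2 = p.1 + 3*γ)) ∪
        (S.filter (fun p => p.1 % 2 = ε ∧ p.1 = p.2 + 3*(n-γ))) := by
    rw [← Finset.filter_or]
    apply Finset.filter_congr
    intro p hp
    rw [hS] at hp
    obtain ⟨i, j⟩ := p
    simp only
    constructor
    · rintro ⟨hm, hi, hF⟩
      unfold Fm at hF
      rw [if_pos (by omega)] at hF
      set Q : ℤ := ((j:ℤ) - (i:ℤ))/3 with hQdef
      have h3Q : 3 * Q = (j:ℤ) - (i:ℤ) := by omega
      have hs : ((-1 : ZMod n))^i = (-1)^ε := signEq (by omega)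
      rw [hs] at hF
      have hQc : ((Q:ℤ) : ZMod n) * d = (-1)^ε * x - a := by
        linear_combination ((-1 : ZMod n))^ε * hF - (a + ((Q:ℤ) : ZMod n) * d) * hsq
      have hQc2 : ((Q:ℤ) : ZMod n) = ((γ:ℕ) : ZMod n) := by
        rw [hγc, hc]
        exact (mulUnitIff u d _ _ hu).mp hQc
      rw [intResid Q γ hγ (by omega) (by omega)] at hQc2
      rcases hQc2 with h | h
      · exact Or.inl ⟨hi, by omega⟩
      · exact Or.inr ⟨hi, by omega⟩
    · intro hline
      have hi : i % 2 = ε := by rcases hline with ⟨h1, h2⟩ | ⟨h1, h2⟩ <;> exact h1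
      have hm : (i + 2*j) % 3 = 0 := by
        rcases hline with ⟨h1, h2⟩ | ⟨h1, h2⟩ <;> omega
      refine ⟨hm, hi, ?_⟩
      unfold Fm
      rw [if_pos (by omega)]
      set Q : ℤ := ((j:ℤ) - (i:ℤ))/3 with hQdef
      have hs : ((-1 : ZMod n))^i = (-1)^ε := signEq (by omega)
      rw [hs]
      have hQc2 : ((Q:ℤ) : ZMod n) = c := by
        rcases hline with ⟨h1, h2⟩ | ⟨h1, h2⟩
        · rw [show Q = ((γ:ℕ) : ℤ) from by omega]
          push_cast
          rw [hγc]
        · rw [show Q = ((γ:ℕ) : ℤ) - ((n:ℕ) : ℤ) from by omega]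
          push_cast [ZMod.natCast_self]
          rw [hγc]
          ring
      rw [hQc2]
      linear_combination ((-1 : ZMod n))^ε * hcd + x * hsq
  -- rewrite the m=1 filter
  have hm1 : S.filter (fun p => (p.1 + 2*p.2) % 3 = 1 ∧ p.1 % 2 = 1 - ε ∧ Fm n a d p.1 p.2 = x)
      = (S.filter (fun p => p.1 % 2 = 1 - ε ∧ 2*p.1 + p.2 + 1 = 3*δ)) ∪
        (S.filter (fun p => p.1 % 2 = 1 - ε ∧ 2*p.1 + p.2 + 1 = 3*(δ+n))) := by
    rw [← Finset.filter_or]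
    apply Finset.filter_congr
    intro p hp
    rw [hS] at hp
    obtain ⟨i, j⟩ := p
    simp only
    constructor
    · rintro ⟨hm, hi, hF⟩
      unfold Fm at hF
      rw [if_neg (by omega), if_pos (by omega)] at hF
      set R : ℤ := (2*(i:ℤ) + (j:ℤ) + 1)/3 with hRdef
      have h3R : 3 * R = 2*(i:ℤ) + (j:ℤ) + 1 := by omega
      have hs : ((-1 : ZMod n))^(i+1) = (-1)^ε := signEq (by omega)
      rw [hs] at hF
      have hRc : ((R:ℤ) : ZMod n) * d = a - (-1)^ε * x := by
        linear_combination (-((-1 : ZMod n))^ε) * hF + (a - ((R:ℤ) : ZMod n) * d) * hsq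
      have hRc2 : ((R:ℤ) : ZMod n) = ((δ:ℕ) : ZMod n) := by
        rw [hδc]
        have := (mulUnitIff u d _ _ hu).mp hRc
        rw [this, hc]
        ring
      rw [intResid2 R δ hδ (by omega) (by omega)] at hRc2
      rcases hRc2 with h | h
      · exact Or.inl ⟨hi, by omega⟩
      · exact Or.inr ⟨hi, by omega⟩
    · intro hline
      have hi : i % 2 = 1 - ε := by rcases hline with ⟨h1, h2⟩ | ⟨h1, h2⟩ <;> exact h1
      have hm : (i + 2*j) % 3 = 1 := by
        rcases hline with ⟨h1, h2⟩ | ⟨h1, h2⟩ <;> omega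
      refine ⟨hm, hi, ?_⟩
      unfold Fm
      rw [if_neg (by omega), if_pos (by omega)]
      set R : ℤ := (2*(i:ℤ) + (j:ℤ) + 1)/3 with hRdef
      have hs : ((-1 : ZMod n))^(i+1) = (-1)^ε := signEq (by omega)
      rw [hs]
      have hRc2 : ((R:ℤ) : ZMod n) = -c := by
        rcases hline with ⟨h1, h2⟩ | ⟨h1, h2⟩
        · rw [show R = ((δ:ℕ) : ℤ) from by omega]
          push_cast
          rw [hδc]
        · rw [show R = ((δ:ℕ) : ℤ) + ((n:ℕ) : ℤ) from by omega]
          push_cast [ZMod.natCast_self]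
          rw [hδc]
          ring
      rw [hRc2]
      linear_combination ((-1 : ZMod n))^ε * hcd + x * hsq
  rw [hm0, hm1]
  have hd0 : Disjoint (S.filter (fun p => p.1 % 2 = ε ∧ p.2 = p.1 + 3*γ))
      (S.filter (fun p => p.1 % 2 = ε ∧ p.1 = p.2 + 3*(n-γ))) := by
    rw [Finset.disjoint_left]
    intro p hp1 hp2
    simp only [Finset.mem_filter, hS] at hp1 hp2
    omega
  have hd1 : Disjoint (S.filter (fun p => p.1 % 2 = 1 - ε ∧ 2*p.1 + p.2 + 1 = 3*δ))
      (S.filter (fun p => p.1 % 2 = 1 - ε ∧ 2*p.1 + p.2 + 1 = 3*(δ+n))) := by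
    rw [Finset.disjoint_left]
    intro p hp1 hp2
    simp only [Finset.mem_filter, hS] at hp1 hp2
    omega
  rw [Finset.card_union_of_disjoint hd0, Finset.card_union_of_disjoint hd1]
  rw [lineM0a S (3*γ) ε hε hS, lineM0b S (3*(n-γ)) ε hε hS,
      lineM1 S δ (1-ε) (by omega) hS, lineM1 S (δ+n) (1-ε) (by omega) hS]
  clear hm0 hm1 hd0 hd1 hγc hδc hsq hcd hγdef hδdef
  clear_value γ δ
  rcases hrel with h | h
  · interval_cases ε <;> omega
  · have hδ2 : δ = n - γ := by omega
    subst hδ2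
    have hγ4 : γ % 4 = 0 ∨ γ % 4 = 1 ∨ γ % 4 = 2 ∨ γ % 4 = 3 := by omega
    have hn4 : n % 4 = 1 ∨ n % 4 = 3 := by omega
    rcases hγ4 with hγ4 | hγ4 | hγ4 | hγ4 <;> rcases hn4 with hn4 | hn4 <;>
      interval_cases ε <;> omega


set_option maxHeartbeats 1600000 in
theorem stmt16 (n : ℕ) (hn : Odd n) (a d : ZMod n) (hd : IsUnit d) :
    ∀ x : ZMod n,
      (steinhaus (fun t : ℕ => IAP3 a (-d) (d - a) d (-(2 * d)) d (t : ℤ)) (3 * n)).count x =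
        (3 * (3 * n + 1)) / 2 := by
  intro x
  have hn1 : n % 2 = 1 := Nat.odd_iff.mp hn
  haveI : NeZero n := ⟨by omega⟩
  obtain ⟨v, hv⟩ := hd
  set u : ZMod n := ↑v⁻¹ with hudef
  have hu : u * d = 1 := by
    rw [hudef, ← hv, ← Units.val_mul]
    simp
  set S := (Finset.range (3*n) ×ˢ Finset.range (3*n)).filter (fun p => p.1 + p.2 < 3*n)
    with hSdef
  have hS : ∀ p : ℕ × ℕ, p ∈ S ↔ p.1 + p.2 < 3*n := by
    intro p
    rw [hSdef]
    simp only [Finset.mem_filter, Finset.mem_product, Finset.mem_range]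
    omega
  unfold steinhaus
  rw [Multiset.count_map]
  show (S.filter (fun p => x = ∑ k ∈ Finset.range (p.1 + 1),
      p.1.choose k • IAP3 a (-d) (d - a) d (-(2 * d)) d (((p.2 + k : ℕ)) : ℤ))).card = _
  have hfeq : S.filter (fun p => x = ∑ k ∈ Finset.range (p.1 + 1),
        p.1.choose k • IAP3 a (-d) (d - a) d (-(2 * d)) d (((p.2 + k : ℕ)) : ℤ)) =
      S.filter (fun p => Fm n a d p.1 p.2 = x) := by
    apply Finset.filter_congr
    intro p _
    rw [T_eq_Fm n a d p.1 p.2]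
    exact eq_comm
  rw [hfeq]
  have hunion : S.filter (fun p => Fm n a d p.1 p.2 = x) =
      ((S.filter (fun p => (p.1 + 2*p.2) % 3 = 0 ∧ p.1 % 2 = 0 ∧ Fm n a d p.1 p.2 = x)) ∪
       (S.filter (fun p => (p.1 + 2*p.2) % 3 = 1 ∧ p.1 % 2 = 1 ∧ Fm n a d p.1 p.2 = x))) ∪
      ((S.filter (fun p => (p.1 + 2*p.2) % 3 = 0 ∧ p.1 % 2 = 1 ∧ Fm n a d p.1 p.2 = x)) ∪
       (S.filter (fun p => (p.1 + 2*p.2) % 3 = 1 ∧ p.1 % 2 = 0 ∧ Fm n a d p.1 p.2 = x))) ∪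
      (S.filter (fun p => (p.1 + 2*p.2) % 3 = 2 ∧ Fm n a d p.1 p.2 = x)) := by
    rw [← Finset.filter_or, ← Finset.filter_or, ← Finset.filter_or, ← Finset.filter_or]
    apply Finset.filter_congr
    intro p _
    constructor
    · intro h
      have h3 : (p.1 + 2*p.2) % 3 = 0 ∨ (p.1 + 2*p.2) % 3 = 1 ∨ (p.1 + 2*p.2) % 3 = 2 := by
        omega
      have h2 : p.1 % 2 = 0 ∨ p.1 % 2 = 1 := by omega
      tauto
    · intro h
      tauto
  rw [hunion]
  have hD1 : Disjoint
      (S.filter (fun p => (p.1 + 2*p.2) % 3 = 0 ∧ p.1 % 2 = 0 ∧ Fm n a d p.1 p.2 = x))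
      (S.filter (fun p => (p.1 + 2*p.2) % 3 = 1 ∧ p.1 % 2 = 1 ∧ Fm n a d p.1 p.2 = x)) := by
    rw [Finset.disjoint_left]
    intro p hp1 hp2
    simp only [Finset.mem_filter] at hp1 hp2
    omega
  have hD2 : Disjoint
      (S.filter (fun p => (p.1 + 2*p.2) % 3 = 0 ∧ p.1 % 2 = 1 ∧ Fm n a d p.1 p.2 = x))
      (S.filter (fun p => (p.1 + 2*p.2) % 3 = 1 ∧ p.1 % 2 = 0 ∧ Fm n a d p.1 p.2 = x)) := by
    rw [Finset.disjoint_left]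
    intro p hp1 hp2
    simp only [Finset.mem_filter] at hp1 hp2
    omega
  have hD3 : Disjoint
      ((S.filter (fun p => (p.1 + 2*p.2) % 3 = 0 ∧ p.1 % 2 = 0 ∧ Fm n a d p.1 p.2 = x)) ∪
       (S.filter (fun p => (p.1 + 2*p.2) % 3 = 1 ∧ p.1 % 2 = 1 ∧ Fm n a d p.1 p.2 = x)))
      ((S.filter (fun p => (p.1 + 2*p.2) % 3 = 0 ∧ p.1 % 2 = 1 ∧ Fm n a d p.1 p.2 = x)) ∪
       (S.filter (fun p => (p.1 + 2*p.2) % 3 = 1 ∧ p.1 % 2 = 0 ∧ Fm n a d p.1 p.2 = x))) := by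
    rw [Finset.disjoint_left]
    intro p hp1 hp2
    simp only [Finset.mem_union, Finset.mem_filter] at hp1 hp2
    omega
  have hD4 : Disjoint
      (((S.filter (fun p => (p.1 + 2*p.2) % 3 = 0 ∧ p.1 % 2 = 0 ∧ Fm n a d p.1 p.2 = x)) ∪
       (S.filter (fun p => (p.1 + 2*p.2) % 3 = 1 ∧ p.1 % 2 = 1 ∧ Fm n a d p.1 p.2 = x))) ∪
      ((S.filter (fun p => (p.1 + 2*p.2) % 3 = 0 ∧ p.1 % 2 = 1 ∧ Fm n a d p.1 p.2 = x)) ∪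
       (S.filter (fun p => (p.1 + 2*p.2) % 3 = 1 ∧ p.1 % 2 = 0 ∧ Fm n a d p.1 p.2 = x))))
      (S.filter (fun p => (p.1 + 2*p.2) % 3 = 2 ∧ Fm n a d p.1 p.2 = x)) := by
    rw [Finset.disjoint_left]
    intro p hp1 hp2
    simp only [Finset.mem_union, Finset.mem_filter] at hp1 hp2
    omega
  rw [Finset.card_union_of_disjoint hD4, Finset.card_union_of_disjoint hD3,
      Finset.card_union_of_disjoint hD1, Finset.card_union_of_disjoint hD2]
  have hA0 := lemA hn1 a d x u hu 0 (by omega) S hS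
  have hA1 := lemA hn1 a d x u hu 1 (by omega) S hS
  simp only [Nat.sub_zero, Nat.sub_self] at hA0 hA1
  have hB := lemB hn1 a d x u hu S hS
  omega
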